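/- arXiv:1410.3512 — 6 statements merged into one kernel-verified Lean document; each statement's English description precedes it below -/
import Mathlib

section
/- As x → ∞, one has lim_{x→∞} x · e^{−x}·g(x)/(1 − e^{−x}) = 1; that is, the quantity h¹(x) = e^{−x}g(x)/(1 − e^{−x}) is asymptotically equal to 1/x. -/
open Real Filter

/-- `g x = ∫_0^x (e^z − 1)/z dz`, with the integrand extended continuously
by the value `1` at `z = 0`. -/
noncomputable def g (x : ℝ) : ℝ :=
  ∫ z in (0:ℝ)..x, if z = 0 then 1 else (Real.exp z - 1) / z

/-!
The integrand is `dslope exp 0`. Comparing it with `(e^z - 1)/x` on `[0, x]` gives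
`g x ≥ (e^x - 1 - x)/x`. For the upper bound split `[0, x]` at `s = x - 2 log x`: on `[0, s]` the
integrand is at most `e^z`, contributing at most `e^s = e^x/x²`, and on `[s, x]` it is at most
`e^z/s`, contributing at most `e^x/s`. Both bounds are `(1 + o(1)) e^x/x`.
-/

open Topology MeasureTheory intervalIntegral

lemma dslope_exp_zero_of_ne {z : ℝ} (hz : z ≠ 0) : dslope exp 0 z = (exp z - 1) / z := by
  rw [dslope_of_ne _ hz, slope_def_field, exp_zero, sub_zero]

lemma g_eq_integral_dslope (x : ℝ) : g x = ∫ z in (0:ℝ)..x, dslope exp 0 z := by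
  refine integral_congr fun z _ => ?_
  rcases eq_or_ne z 0 with rfl | hz
  · simp [dslope_same]
  · simp [hz, dslope_exp_zero_of_ne]

lemma continuous_dslope_exp_zero : Continuous (dslope exp 0) :=
  continuousOn_univ.mp <|
    (continuousOn_dslope univ_mem).mpr ⟨continuous_exp.continuousOn, differentiableAt_exp⟩

lemma dslope_exp_zero_le_exp {z : ℝ} (hz : 0 ≤ z) : dslope exp 0 z ≤ exp z := by
  rcases hz.eq_or_lt with rfl | hz
  · simp [dslope_same]
  · rw [dslope_exp_zero_of_ne hz.ne', div_le_iff₀ hz]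
    -- `e^z - 1 ≤ z e^z` is `1 - z ≤ e^{-z}` multiplied by `e^z`
    have h := mul_le_mul_of_nonneg_left (one_sub_le_exp_neg z) (exp_pos z).le
    rw [← exp_add, add_neg_cancel, exp_zero] at h
    linarith

lemma dslope_exp_zero_le_exp_div {s z : ℝ} (hs : 0 < s) (hsz : s ≤ z) :
    dslope exp 0 z ≤ exp z / s := by
  rw [dslope_exp_zero_of_ne (hs.trans_le hsz).ne']
  calc (exp z - 1) / z ≤ exp z / z := div_le_div_of_nonneg_right (by linarith) (by linarith)
    _ ≤ exp z / s := div_le_div_of_nonneg_left (exp_pos z).le hs hsz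

lemma exp_sub_one_div_le_dslope_exp_zero {x z : ℝ} (hz : 0 ≤ z) (hzx : z ≤ x) :
    (exp z - 1) / x ≤ dslope exp 0 z := by
  rcases hz.eq_or_lt with rfl | hz
  · simp [dslope_same]
  · rw [dslope_exp_zero_of_ne hz.ne']
    exact div_le_div_of_nonneg_left (by linarith [add_one_le_exp z]) hz hzx

lemma exp_sub_one_sub_div_le_g {x : ℝ} (hx : 0 ≤ x) : (exp x - 1 - x) / x ≤ g x := by
  rw [g_eq_integral_dslope]
  convert integral_mono_on (μ := volume) hx
    ((by fun_prop : Continuous fun z => (exp z - 1) / x).intervalIntegrable 0 x)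
    (continuous_dslope_exp_zero.intervalIntegrable 0 x)
    (fun z hz => exp_sub_one_div_le_dslope_exp_zero hz.1 hz.2) using 1
  rw [intervalIntegral.integral_div, integral_sub (continuous_exp.intervalIntegrable 0 x)
    intervalIntegrable_const, integral_exp, intervalIntegral.integral_const, exp_zero,
    smul_eq_mul, mul_one, sub_zero]

lemma g_le_exp_add_exp_div {s x : ℝ} (hs : 0 < s) (hsx : s ≤ x) :
    g x ≤ exp s + exp x / s := by
  have hint := continuous_dslope_exp_zero.intervalIntegrable (μ := volume)
  have head : ∫ z in (0:ℝ)..s, dslope exp 0 z ≤ exp s := by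
    calc ∫ z in (0:ℝ)..s, dslope exp 0 z ≤ ∫ z in (0:ℝ)..s, exp z :=
          integral_mono_on hs.le (hint 0 s) (continuous_exp.intervalIntegrable 0 s)
            fun z hz => dslope_exp_zero_le_exp hz.1
      _ ≤ exp s := by rw [integral_exp, exp_zero]; linarith
  have tail : ∫ z in s..x, dslope exp 0 z ≤ exp x / s := by
    calc ∫ z in s..x, dslope exp 0 z ≤ ∫ z in s..x, exp z / s :=
          integral_mono_on hsx (hint s x) ((continuous_exp.div_const s).intervalIntegrable s x)
            fun z hz => dslope_exp_zero_le_exp_div hs hz.1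
      _ ≤ exp x / s := by
          rw [intervalIntegral.integral_div, integral_exp]
          gcongr
          linarith [exp_pos s]
  rw [g_eq_integral_dslope, ← integral_add_adjacent_intervals (hint 0 s) (hint s x)]
  linarith

lemma tendsto_mul_exp_neg_mul_g : Tendsto (fun x => x * exp (-x) * g x) atTop (𝓝 1) := by
  have hlog : Tendsto (fun x => log x / x) atTop (𝓝 0) :=
    isLittleO_log_id_atTop.tendsto_div_nhds_zero
  have hxexp : Tendsto (fun x => x * exp (-x)) atTop (𝓝 0) := by
    simpa using tendsto_pow_mul_exp_neg_atTop_nhds_zero 1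
  have lower : Tendsto (fun x => 1 - (exp (-x) + x * exp (-x))) atTop (𝓝 1) := by
    simpa using (tendsto_exp_neg_atTop_nhds_zero.add hxexp).const_sub 1
  have upper : Tendsto (fun x => x⁻¹ + (1 - 2 * (log x / x))⁻¹) atTop (𝓝 1) := by
    simpa using tendsto_inv_atTop_zero.add (((hlog.const_mul 2).const_sub 1).inv₀ (by norm_num))
  refine tendsto_of_tendsto_of_tendsto_of_le_of_le' lower upper ?_ ?_
  · filter_upwards [eventually_gt_atTop 0] with x hx
    calc 1 - (exp (-x) + x * exp (-x)) = x * exp (-x) * ((exp x - 1 - x) / x) := by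
          rw [exp_neg]; field_simp; ring
      _ ≤ x * exp (-x) * g x := by gcongr; exact exp_sub_one_sub_div_le_g hx.le
  · filter_upwards [eventually_ge_atTop 1, hlog.eventually (gt_mem_nhds one_half_pos)]
      with x hx1 hlogx
    have hx : 0 < x := by linarith
    have hs : 0 < x - 2 * log x := by
      have := (div_lt_iff₀ hx).mp hlogx; linarith
    calc x * exp (-x) * g x
        ≤ x * exp (-x) * (exp (x - 2 * log x) + exp x / (x - 2 * log x)) := by
          gcongr
          exact g_le_exp_add_exp_div hs (by linarith [log_nonneg hx1])
      _ = x⁻¹ + (1 - 2 * (log x / x))⁻¹ := by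
          have hexp : exp (2 * log x) = x ^ 2 := by rw [two_mul, exp_add, exp_log hx, sq]
          rw [exp_sub, hexp, exp_neg]
          field_simp

/-- `h¹(x) = e^{−x} g(x)/(1 − e^{−x})` is asymptotically `1/x` as `x → ∞`. -/
theorem h1_asymptotic :
    Tendsto (fun x : ℝ => x * (Real.exp (-x) * g x / (1 - Real.exp (-x)))) atTop (nhds 1) := by
  have hden : Tendsto (fun x => 1 - exp (-x)) atTop (𝓝 1) := by
    simpa using tendsto_exp_neg_atTop_nhds_zero.const_sub 1
  have h := tendsto_mul_exp_neg_mul_g.div hden one_ne_zero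
  rw [div_one] at h
  exact h.congr fun x => by rw [Pi.div_apply]; ring
end

section
/- As x → ∞, one has lim_{x→∞} x² · (e^{−x}/(1 − e^{−x})) · ∫_0^x g(t)/t dt = 1; that is, the quantity h²(x) = (e^{−x}/(1 − e^{−x}))·∫_0^x g(t)/t dt is asymptotically equal to 1/x². -/
/-!
Both integrands are difference quotients `dslope f 0` (of `exp`, then of `g`), hence continuous.
The core is an integrated form of L'Hôpital's rule: if `f t ~ eᵗ/tᵏ` then `∫₀ˣ f ~ eˣ/xᵏ`.
Indeed `u t = eᵗ/tᵏ` has derivative `u t * (1 - k/t) ~ u t`, equivalences between nonnegative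
functions with divergent integrals pass to the integrals, and `∫₁ˣ u' = u x - u 1 ~ u x`.
Applied with `k = 1` this gives `g x ~ eˣ/x`, so `g t / t ~ eᵗ/t²`, and applied again with
`k = 2` it gives `∫₀ˣ g t / t dt ~ eˣ/x²`, while `1 - e⁻ˣ → 1`.
-/

open Real Filter

open Asymptotics MeasureTheory

theorem Continuous.dslope {𝕜 E : Type*} [NontriviallyNormedField 𝕜]
    [NormedAddCommGroup E] [NormedSpace 𝕜 E] {f : 𝕜 → E} {a : 𝕜} (hf : Continuous f)
    (ha : DifferentiableAt 𝕜 f a) : Continuous (dslope f a) :=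
  continuousOn_univ.1 ((continuousOn_dslope univ_mem).2 ⟨hf.continuousOn, ha⟩)

namespace intervalIntegral

theorem isLittleO_integral_of_isLittleO {E : Type*} [NormedAddCommGroup E]
    [NormedSpace ℝ E] {f : ℝ → E} {φ : ℝ → ℝ} {a : ℝ}
    (hf : ∀ b ≥ a, IntervalIntegrable f volume a b)
    (hφ : ∀ b ≥ a, IntervalIntegrable φ volume a b)
    (hφ_nonneg : ∀ᶠ t in atTop, 0 ≤ φ t)
    (hφ_tendsto : Tendsto (fun x => ∫ t in a..x, φ t) atTop atTop)
    (hfφ : f =o[atTop] φ) :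
    (fun x => ∫ t in a..x, f t) =o[atTop] fun x => ∫ t in a..x, φ t := by
  refine IsLittleO.of_bound fun c hc => ?_
  obtain ⟨T, hT⟩ := eventually_atTop.1 ((hfφ.bound (half_pos hc)).and hφ_nonneg)
  set T' := max T a
  have hT'a : a ≤ T' := le_max_right T a
  have htail : ∀ x ≥ T', ‖∫ t in T'..x, f t‖ ≤ c / 2 * ∫ t in T'..x, φ t := by
    intro x hx
    rw [← integral_const_mul]
    refine norm_integral_le_of_norm_le hx (ae_of_all _ fun t ht => ?_)
      (((hφ T' hT'a).symm.trans (hφ x (hT'a.trans hx))).const_mul _)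
    obtain ⟨hft, hφt⟩ := hT t ((le_max_left T a).trans ht.1.le)
    rwa [Real.norm_of_nonneg hφt] at hft
  -- the head `∫ₐ^{T'}` is a constant, eventually absorbed by half of the divergent `∫ₐˣ φ`
  have hlarge := (hφ_tendsto.const_mul_atTop (half_pos hc)).eventually_ge_atTop
    (‖∫ t in a..T', f t‖ + c / 2 * |∫ t in a..T', φ t|)
  filter_upwards [hlarge, hφ_tendsto.eventually_ge_atTop 0, eventually_ge_atTop T']
    with x hx hφx hxT
  have hsplit_f := integral_add_adjacent_intervals (hf T' hT'a)
    ((hf T' hT'a).symm.trans (hf x (hT'a.trans hxT)))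
  have hsplit_φ := integral_add_adjacent_intervals (hφ T' hT'a)
    ((hφ T' hT'a).symm.trans (hφ x (hT'a.trans hxT)))
  rw [Real.norm_of_nonneg hφx, ← hsplit_f]
  calc ‖(∫ t in a..T', f t) + ∫ t in T'..x, f t‖
      ≤ ‖∫ t in a..T', f t‖ + c / 2 * ∫ t in T'..x, φ t :=
        (norm_add_le _ _).trans (by gcongr; exact htail x hxT)
    _ ≤ c * ∫ t in a..x, φ t := by
        rw [← hsplit_φ] at hx ⊢
        nlinarith [neg_abs_le (∫ t in a..T', φ t)]

theorem isEquivalent_integral_of_isEquivalent {f φ : ℝ → ℝ} {a : ℝ}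
    (hf : ∀ b ≥ a, IntervalIntegrable f volume a b)
    (hφ : ∀ b ≥ a, IntervalIntegrable φ volume a b)
    (hφ_nonneg : ∀ᶠ t in atTop, 0 ≤ φ t)
    (hφ_tendsto : Tendsto (fun x => ∫ t in a..x, φ t) atTop atTop)
    (hfφ : f ~[atTop] φ) :
    (fun x => ∫ t in a..x, f t) ~[atTop] fun x => ∫ t in a..x, φ t := by
  refine (isLittleO_integral_of_isLittleO (fun b hb => (hf b hb).sub (hφ b hb)) hφ
    hφ_nonneg hφ_tendsto hfφ.isLittleO).congr' ?_ EventuallyEq.rfl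
  filter_upwards [eventually_ge_atTop a] with x hx
  exact integral_sub (hf x hx) (hφ x hx)

end intervalIntegral

theorem hasDerivAt_exp_div_pow (k : ℕ) {t : ℝ} (ht : t ≠ 0) :
    HasDerivAt (fun s => exp s / s ^ k) (exp t / t ^ k * (1 - k / t)) t := by
  refine ((hasDerivAt_exp t).div (hasDerivAt_pow k t) (pow_ne_zero k ht)).congr_deriv ?_
  rcases k with _ | k
  · simp
  · simp only [Nat.add_sub_cancel]
    field_simp
    push_cast
    ring

theorem isEquivalent_integral_exp_div_pow (k : ℕ) {f : ℝ → ℝ} {a : ℝ}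
    (hf : ∀ b, IntervalIntegrable f volume a b) (hfk : f ~[atTop] fun t => exp t / t ^ k) :
    (fun x => ∫ t in a..x, f t) ~[atTop] fun x => exp x / x ^ k := by
  set u : ℝ → ℝ := fun t => exp t / t ^ k
  set φ : ℝ → ℝ := fun t => u t * (1 - k / t)
  have hu_top : Tendsto u atTop atTop := tendsto_exp_div_pow_atTop k
  have hφu : φ ~[atTop] u := by
    have h1 : (fun t : ℝ => 1 - k / t) ~[atTop] Function.const ℝ (1 : ℝ) :=
      (isEquivalent_const_iff_tendsto one_ne_zero).2 <| by
        simpa using tendsto_const_nhds.sub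
          ((tendsto_const_nhds (x := (k : ℝ))).div_atTop tendsto_id)
    have h := (IsEquivalent.refl (u := u)).mul h1
    rwa [show u * Function.const ℝ (1 : ℝ) = u by ext; simp] at h
  have hderiv : ∀ b ≥ 1, ∀ t ∈ Set.uIcc 1 b, HasDerivAt u (φ t) t := fun b hb t ht =>
    hasDerivAt_exp_div_pow k (by rw [Set.uIcc_of_le hb] at ht; linarith [ht.1])
  have hφ_int : ∀ b ≥ 1, IntervalIntegrable φ volume 1 b := fun b hb =>
    ContinuousOn.intervalIntegrable fun t ht => by
      have ht0 : t ≠ 0 := by rw [Set.uIcc_of_le hb] at ht; linarith [ht.1]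
      exact ((hderiv b hb t ht).continuousAt.mul
        (by fun_prop (disch := exact ht0))).continuousWithinAt
  have hint_φ : (fun x => ∫ t in (1:ℝ)..x, φ t) ~[atTop] u := by
    refine (IsEquivalent.refl.sub_isLittleO ((isLittleO_const_left (c := u 1)).2
      (Or.inr (tendsto_norm_atTop_atTop.comp hu_top)))).congr_left ?_
    filter_upwards [eventually_ge_atTop 1] with x hx
    exact (intervalIntegral.integral_eq_sub_of_hasDerivAt (hderiv x hx) (hφ_int x hx)).symm
  have hφ_nonneg : ∀ᶠ t in atTop, 0 ≤ φ t := by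
    filter_upwards [eventually_ge_atTop (k + 1 : ℝ)] with t ht
    have ht0 : 0 < t := by linarith [(k.cast_nonneg : (0:ℝ) ≤ k)]
    exact mul_nonneg (by positivity) (by rw [sub_nonneg, div_le_one ht0]; linarith)
  have hint_f : (fun x => ∫ t in (1:ℝ)..x, f t) ~[atTop] u :=
    (intervalIntegral.isEquivalent_integral_of_isEquivalent
      (fun b _ => (hf 1).symm.trans (hf b)) hφ_int hφ_nonneg
      (hint_φ.symm.tendsto_atTop hu_top) (hfk.trans hφu.symm)).trans hint_φ
  refine (hint_f.const_add_of_norm_tendsto_atTop (c := ∫ t in a..1, f t)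
    (tendsto_norm_atTop_atTop.comp hu_top)).congr_left ?_
  filter_upwards with x
  exact intervalIntegral.integral_add_adjacent_intervals (hf 1) ((hf 1).symm.trans (hf x))

theorem ite_eq_zero_eventuallyEq_atTop {c : ℝ} {f : ℝ → ℝ} :
    (fun t => if t = 0 then c else f t) =ᶠ[atTop] f := by
  filter_upwards [eventually_ne_atTop 0] with t ht
  simp [ht]

theorem dslope_exp_zero : dslope exp 0 = fun z => if z = 0 then 1 else (exp z - 1) / z := by
  ext z
  split_ifs with hz
  · simp [hz, dslope_same]
  · simp [dslope_of_ne _ hz, slope_def_field]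

theorem continuous_exp_sub_one_div :
    Continuous fun z => if z = 0 then 1 else (exp z - 1) / z :=
  dslope_exp_zero ▸ continuous_exp.dslope differentiableAt_exp

theorem hasDerivAt_g (x : ℝ) : HasDerivAt g (if x = 0 then 1 else (exp x - 1) / x) x :=
  (continuous_exp_sub_one_div.integral_hasStrictDerivAt 0 x).hasDerivAt

theorem dslope_g_zero : dslope g 0 = fun t => if t = 0 then 1 else g t / t := by
  ext t
  split_ifs with ht
  · simp [ht, dslope_same, (hasDerivAt_g 0).deriv]
  · simp [dslope_of_ne _ ht, slope_def_field, g]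

theorem continuous_g_div : Continuous fun t => if t = 0 then 1 else g t / t := by
  have hg : Differentiable ℝ g := fun x => (hasDerivAt_g x).differentiableAt
  exact dslope_g_zero ▸ hg.continuous.dslope (hg 0)

theorem isEquivalent_g : g ~[atTop] fun x => exp x / x ^ 1 := by
  have hexp : (fun z => exp z - 1) ~[atTop] exp := IsEquivalent.refl.sub_isLittleO
    (isLittleO_const_left.2 (Or.inr (tendsto_norm_atTop_atTop.comp tendsto_exp_atTop)))
  have hintegrand : (fun z => if z = 0 then 1 else (exp z - 1) / z) ~[atTop]
      fun z => exp z / z ^ 1 := by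
    refine ((hexp.div (IsEquivalent.refl (u := id))).congr_left
      ite_eq_zero_eventuallyEq_atTop.symm).congr_right ?_
    filter_upwards with z
    simp
  exact isEquivalent_integral_exp_div_pow 1 (continuous_exp_sub_one_div.intervalIntegrable 0)
    hintegrand

theorem isEquivalent_g_div :
    (fun t => if t = 0 then 1 else g t / t) ~[atTop] fun t => exp t / t ^ 2 := by
  refine ((isEquivalent_g.div (IsEquivalent.refl (u := id))).congr_left
    ite_eq_zero_eventuallyEq_atTop.symm).congr_right ?_
  filter_upwards with t
  simp [div_div, pow_two]

/-- `h²(x) = (e^{−x}/(1 − e^{−x}))·∫_0^x g(t)/t dt` is asymptotically `1/x²`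
as `x → ∞`. -/
theorem h2_asymptotic :
    Tendsto
      (fun x : ℝ => x ^ 2 *
        (Real.exp (-x) / (1 - Real.exp (-x)) *
          ∫ t in (0:ℝ)..x, if t = 0 then 1 else g t / t))
      atTop (nhds 1) := by
  have hI := (isEquivalent_iff_tendsto_one (eventually_ne_atTop 0 |>.mono fun x hx => by
    positivity)).1 (isEquivalent_integral_exp_div_pow 2 (continuous_g_div.intervalIntegrable 0)
      isEquivalent_g_div)
  have hcorr : Tendsto (fun x : ℝ => (1 - exp (-x))⁻¹) atTop (nhds 1) := by
    simpa using (tendsto_const_nhds.sub tendsto_exp_neg_atTop_nhds_zero).inv₀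
      (by norm_num : (1:ℝ) - 0 ≠ 0)
  have h := hI.mul hcorr
  rw [one_mul] at h
  refine h.congr fun x => ?_
  simp only [Pi.div_apply, exp_neg]
  field_simp
end

section
/- As x → ∞, one has lim_{x→∞} x² · [ (e^{−x}/(1 − e^{−x}))·∫_0^x g(t)/t dt − ( e^{−x}·g(x)/(1 − e^{−x}) )² ] = 0; that is, the variance h²(x) − (h¹(x))² of the redistributed unit load is o(1/x²) as x → ∞. -/
open Real Filter

/-- `h¹(x) = e^{−x} g(x)/(1 − e^{−x})`. -/
noncomputable def h1 (x : ℝ) : ℝ := Real.exp (-x) * g x / (1 - Real.exp (-x))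

/-- `h²(x) = (e^{−x}/(1 − e^{−x}))·∫_0^x g(t)/t dt`. -/
noncomputable def h2 (x : ℝ) : ℝ :=
  Real.exp (-x) / (1 - Real.exp (-x)) * ∫ t in (0:ℝ)..x, if t = 0 then 1 else g t / t

/-!
Both `x h¹(x)` and `x² h²(x)` tend to `1`, so `x² (h² − (h¹)²) = x² h² − (x h¹)² → 0`.
The two limits come from an `∞/∞` L'Hôpital rule with denominator `eˣ`: if `e^{-x} F' x → L`
then `e^{-x} F x → L`. With `G x = ∫_0^x g(t)/t dt`, the derivatives of `x g x` and `x² G x` are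
`g x + eˣ − 1` and `2 x G x + x g x`, so the rule reduces these limits to
`e^{-x} g x → 0` and `e^{-x} x G x → 0`, which follow from it in the same way.
-/

open Topology

theorem abs_exp_neg_mul_sub_le {F F' : ℝ → ℝ} {L ε M x : ℝ}
    (hF : ∀ x, HasDerivAt F (F' x) x) (hF' : ∀ y ≥ M, |exp (-y) * F' y - L| ≤ ε) (hx : M ≤ x) :
    |exp (-x) * F x - L| ≤ exp (-x) * |F M - L * exp M| + ε := by
  set H : ℝ → ℝ := fun x => F x - L * exp x
  have hH : ∀ y, HasDerivAt (fun y => H y - H M) (F' y - L * exp y) y := fun y =>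
    ((hF y).sub ((hasDerivAt_exp y).const_mul L)).sub_const _
  have hB : ∀ y, HasDerivAt (fun y => ε * (exp y - exp M)) (ε * exp y) y := fun y =>
    ((hasDerivAt_exp y).sub_const _).const_mul _
  have hfence : |H x - H M| ≤ ε * (exp x - exp M) := by
    refine image_norm_le_of_norm_deriv_right_le_deriv_boundary
      (fun y _ => (hH y).continuousAt.continuousWithinAt) (fun y _ => (hH y).hasDerivWithinAt)
      (by simp) hB (fun y hy => ?_) ⟨hx, le_rfl⟩
    calc ‖F' y - L * exp y‖ = exp y * |exp (-y) * F' y - L| := by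
          rw [Real.norm_eq_abs, ← abs_of_pos (exp_pos y), ← abs_mul, abs_of_pos (exp_pos y),
            mul_sub, ← mul_assoc, ← exp_add, add_neg_cancel, exp_zero, one_mul, mul_comm L]
      _ ≤ exp y * ε := by gcongr; exact hF' y hy.1
      _ = ε * exp y := mul_comm _ _
  have hε : 0 ≤ ε := (abs_nonneg _).trans (hF' M le_rfl)
  have hsplit : exp (-x) * F x - L = exp (-x) * (H x - H M) + exp (-x) * H M := by
    simp only [H, exp_neg]; field_simp; ring
  calc |exp (-x) * F x - L| ≤ exp (-x) * |H x - H M| + exp (-x) * |H M| := by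
        rw [hsplit]
        refine (abs_add_le _ _).trans_eq ?_
        rw [abs_mul, abs_mul, abs_of_pos (exp_pos _)]
    _ ≤ exp (-x) * (ε * exp x) + exp (-x) * |H M| := by
        gcongr; nlinarith [exp_pos M]
    _ = exp (-x) * |F M - L * exp M| + ε := by
        rw [mul_left_comm, ← exp_add, neg_add_cancel, exp_zero, mul_one, add_comm]

theorem tendsto_exp_neg_mul_of_hasDerivAt {F F' : ℝ → ℝ} {L : ℝ}
    (hF : ∀ x, HasDerivAt F (F' x) x)
    (hF' : Tendsto (fun x => exp (-x) * F' x) atTop (𝓝 L)) :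
    Tendsto (fun x => exp (-x) * F x) atTop (𝓝 L) := by
  rw [Metric.tendsto_nhds]
  intro ε hε
  obtain ⟨M, hM⟩ := eventually_atTop.1
    ((Metric.tendsto_nhds.1 hF') (ε / 2) (half_pos hε))
  have hrem : Tendsto (fun x => exp (-x) * |F M - L * exp M|) atTop (𝓝 0) := by
    simpa using tendsto_exp_neg_atTop_nhds_zero.mul_const |F M - L * exp M|
  filter_upwards [eventually_ge_atTop M, hrem.eventually (gt_mem_nhds (half_pos hε))]
    with x hxM hxrem
  rw [Real.dist_eq]
  have := abs_exp_neg_mul_sub_le hF (fun y hy => (hM y hy).le) hxM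
  linarith

theorem Differentiable.continuous_dslope {𝕜 E : Type*} [NontriviallyNormedField 𝕜]
    [NormedAddCommGroup E] [NormedSpace 𝕜 E] {f : 𝕜 → E} (hf : Differentiable 𝕜 f) (a : 𝕜) :
    Continuous (dslope f a) :=
  continuousOn_univ.1 ((continuousOn_dslope univ_mem).2 ⟨hf.continuous.continuousOn, hf a⟩)

theorem ite_div_eq_dslope {F : ℝ → ℝ} (hF0 : F 0 = 0) (hF1 : deriv F 0 = 1) :
    (fun t => if t = 0 then 1 else F t / t) = dslope F 0 := by
  funext t
  rcases eq_or_ne t 0 with rfl | ht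
  · simp [dslope_same, hF1]
  · simp [ht, dslope_of_ne _ ht, slope_def_field, hF0]

theorem hasDerivAt_integral_ite_div {F : ℝ → ℝ} (hF : Differentiable ℝ F) (hF0 : F 0 = 0)
    (hF1 : deriv F 0 = 1) (x : ℝ) :
    HasDerivAt (fun x => ∫ t in (0:ℝ)..x, if t = 0 then 1 else F t / t) (dslope F 0 x) x := by
  rw [ite_div_eq_dslope hF0 hF1]
  exact ((hF.continuous_dslope 0).integral_hasStrictDerivAt 0 x).hasDerivAt

theorem mul_dslope_zero (F : ℝ → ℝ) (x : ℝ) : x * dslope F 0 x = F x - F 0 := by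
  simpa using sub_smul_dslope F 0 x

theorem hasDerivAt_g_s8 (x : ℝ) : HasDerivAt g (dslope (fun z => exp z - 1) 0 x) x :=
  hasDerivAt_integral_ite_div (differentiable_exp.sub_const 1) (by simp) (by simp) x

theorem g_zero : g 0 = 0 := intervalIntegral.integral_same

theorem deriv_g_zero : deriv g 0 = 1 := by
  simp [(hasDerivAt_g_s8 0).deriv, dslope_same]

noncomputable def G (x : ℝ) : ℝ := ∫ t in (0:ℝ)..x, if t = 0 then 1 else g t / t

theorem hasDerivAt_G (x : ℝ) : HasDerivAt G (dslope g 0 x) x :=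
  hasDerivAt_integral_ite_div (fun x => (hasDerivAt_g_s8 x).differentiableAt) g_zero deriv_g_zero x

theorem tendsto_one_sub_exp_neg : Tendsto (fun x => 1 - exp (-x)) atTop (𝓝 1) := by
  simpa using tendsto_exp_neg_atTop_nhds_zero.const_sub 1

theorem tendsto_exp_neg_mul_g : Tendsto (fun x => exp (-x) * g x) atTop (𝓝 0) := by
  refine tendsto_exp_neg_mul_of_hasDerivAt hasDerivAt_g_s8 ?_
  have h := tendsto_one_sub_exp_neg.mul tendsto_inv_atTop_zero
  rw [mul_zero] at h
  refine h.congr' ?_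
  filter_upwards [eventually_ne_atTop 0] with x hx
  rw [dslope_of_ne _ hx, slope_def_field, exp_zero, sub_self, sub_zero, sub_zero, exp_neg]
  field_simp

theorem tendsto_exp_neg_mul_mul_g : Tendsto (fun x => exp (-x) * (x * g x)) atTop (𝓝 1) := by
  refine tendsto_exp_neg_mul_of_hasDerivAt (fun x => (hasDerivAt_id x).mul (hasDerivAt_g_s8 x)) ?_
  have h := tendsto_exp_neg_mul_g.add tendsto_one_sub_exp_neg
  rw [zero_add] at h
  refine h.congr fun x => ?_
  rw [id, mul_dslope_zero, exp_zero, sub_self, sub_zero, exp_neg]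
  field_simp

theorem tendsto_exp_neg_mul_G : Tendsto (fun x => exp (-x) * G x) atTop (𝓝 0) := by
  refine tendsto_exp_neg_mul_of_hasDerivAt hasDerivAt_G ?_
  have h := tendsto_exp_neg_mul_g.mul tendsto_inv_atTop_zero
  rw [mul_zero] at h
  refine h.congr' ?_
  filter_upwards [eventually_ne_atTop 0] with x hx
  rw [dslope_of_ne _ hx, slope_def_field, g_zero]
  field_simp
  ring

theorem tendsto_exp_neg_mul_mul_G : Tendsto (fun x => exp (-x) * (x * G x)) atTop (𝓝 0) := by
  refine tendsto_exp_neg_mul_of_hasDerivAt (fun x => (hasDerivAt_id x).mul (hasDerivAt_G x)) ?_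
  have h := tendsto_exp_neg_mul_G.add tendsto_exp_neg_mul_g
  rw [add_zero] at h
  refine h.congr fun x => ?_
  rw [id, mul_dslope_zero, g_zero]
  ring

theorem tendsto_exp_neg_mul_sq_mul_G : Tendsto (fun x => exp (-x) * (x ^ 2 * G x)) atTop (𝓝 1) := by
  refine tendsto_exp_neg_mul_of_hasDerivAt (fun x => (hasDerivAt_pow 2 x).mul (hasDerivAt_G x)) ?_
  have h := (tendsto_exp_neg_mul_mul_G.const_mul 2).add tendsto_exp_neg_mul_mul_g
  rw [mul_zero, zero_add] at h
  refine h.congr fun x => ?_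
  rw [sq x, mul_assoc x x, mul_dslope_zero, g_zero]
  ring

/-- The variance `h²(x) − (h¹(x))²` of the redistributed unit load is `o(1/x²)`
as `x → ∞`. -/
theorem variance_asymptotic :
    Tendsto (fun x : ℝ => x ^ 2 * (h2 x - (h1 x) ^ 2)) atTop (nhds 0) := by
  have hlim := (tendsto_exp_neg_mul_sq_mul_G.div tendsto_one_sub_exp_neg one_ne_zero).sub
    ((tendsto_exp_neg_mul_mul_g.div tendsto_one_sub_exp_neg one_ne_zero).pow 2)
  rw [div_one, one_pow, sub_self] at hlim
  refine hlim.congr' ?_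
  filter_upwards [eventually_gt_atTop 0] with x hx
  have hden : 1 - exp (-x) ≠ 0 := (sub_pos.2 (exp_lt_one_iff.2 (neg_neg_of_pos hx))).ne'
  change _ = x ^ 2 * (exp (-x) / (1 - exp (-x)) * G x - h1 x ^ 2)
  simp only [Pi.div_apply, h1]
  field_simp
end

section
/- Let a < b be real numbers, let J : ℝ → ℝ be continuous on [a,b] with J(r) > 0 for all r ∈ [a,b], and let f : ℝ → ℝ be continuous on [a,b]. Then lim_{λ→∞} ∫_a^b f(r) · λ · h¹(λ·J(r)) dr = ∫_a^b f(r)/J(r) dr, where the limit is taken as the real parameter λ tends to infinity. -/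
open Real Filter

noncomputable def phi (z : ℝ) : ℝ := if z = 0 then 1 else (Real.exp z - 1) / z

lemma phi_cont : Continuous phi := by
  rw [continuous_iff_continuousAt]
  intro x
  rcases eq_or_ne x 0 with rfl | hx
  · have hslope : Tendsto (slope Real.exp 0) (nhdsWithin 0 {(0:ℝ)}ᶜ) (nhds 1) := by
      have := (Real.hasDerivAt_exp 0)
      rw [hasDerivAt_iff_tendsto_slope] at this
      simpa using this
    have h1 : Tendsto phi (nhdsWithin 0 {(0:ℝ)}ᶜ) (nhds 1) := by
      refine hslope.congr' ?_
      filter_upwards [self_mem_nhdsWithin] with z hz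
      rw [Set.mem_compl_singleton_iff] at hz
      simp [phi, slope, hz, Real.exp_zero, div_eq_inv_mul]
    unfold ContinuousAt
    have h0 : phi 0 = 1 := by simp [phi]
    rw [h0, ← nhdsNE_sup_pure]
    exact h1.sup (by simpa [h0] using tendsto_pure_nhds phi (0:ℝ))
  · have hc : ContinuousAt (fun z => (Real.exp z - 1) / z) x :=
      ((Real.continuous_exp.sub continuous_const).continuousAt).div continuousAt_id hx
    refine hc.congr ?_
    filter_upwards [isOpen_compl_singleton.mem_nhds hx] with z hz
    rw [Set.mem_compl_singleton_iff] at hz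
    simp [phi, hz]

lemma phi_intInt (a b : ℝ) : IntervalIntegrable phi MeasureTheory.volume a b :=
  phi_cont.intervalIntegrable a b

lemma g_eq (x : ℝ) : g x = ∫ z in (0:ℝ)..x, phi z := rfl

lemma g_cont : Continuous g := by
  have := intervalIntegral.continuous_primitive (fun a b => phi_intInt a b) 0
  simpa [← g_eq] using this

lemma phi_nonneg {z : ℝ} (hz : 0 ≤ z) : 0 ≤ phi z := by
  rcases eq_or_ne z 0 with rfl | h
  · simp [phi]
  · have hz' : 0 < z := lt_of_le_of_ne hz (Ne.symm h)
    have : 0 ≤ Real.exp z - 1 := by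
      have := Real.one_le_exp hz
      linarith
    simp only [phi, h, if_false]
    positivity

lemma phi_le_exp {z : ℝ} (hz : 0 ≤ z) : phi z ≤ Real.exp z := by
  rcases eq_or_ne z 0 with rfl | h
  · simp [phi, Real.one_le_exp]
  · have hz' : 0 < z := lt_of_le_of_ne hz (Ne.symm h)
    simp only [phi, h, if_false]
    rw [div_le_iff₀ hz']
    -- e^z - 1 ≤ e^z * z  since 1 - z ≤ e^{-z}
    have h2 : -z + 1 ≤ Real.exp (-z) := Real.add_one_le_exp (-z)
    have h3 : Real.exp (-z) * Real.exp z = 1 := by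
      rw [← Real.exp_add]; simp
    nlinarith [Real.exp_pos z]

/-- Lower bound: for `x > 0`, `(e^x - 1 - x)/x ≤ g x`. -/
lemma g_lower {x : ℝ} (hx : 0 < x) : (Real.exp x - 1 - x) / x ≤ g x := by
  have hle : ∀ z ∈ Set.Icc (0:ℝ) x, (Real.exp z - 1) / x ≤ phi z := by
    intro z hz
    rcases eq_or_ne z 0 with rfl | h
    · simp only [phi, if_pos rfl, Real.exp_zero, sub_self, zero_div]
      exact zero_le_one
    · have hz' : 0 < z := lt_of_le_of_ne hz.1 (Ne.symm h)
      simp only [phi, h, if_false]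
      have hnum : 0 ≤ Real.exp z - 1 := by
        have := Real.one_le_exp hz.1; linarith
      exact div_le_div_of_nonneg_left hnum hz' hz.2  -- check name
  have hint : (∫ z in (0:ℝ)..x, (Real.exp z - 1) / x) ≤ ∫ z in (0:ℝ)..x, phi z := by
    apply intervalIntegral.integral_mono_on (le_of_lt hx) _ (phi_intInt 0 x) hle
    exact (((Real.continuous_exp.sub continuous_const).div_const x)).intervalIntegrable 0 x
  have hval : (∫ z in (0:ℝ)..x, (Real.exp z - 1) / x) = (Real.exp x - 1 - x) / x := by
    rw [intervalIntegral.integral_div]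
    congr 1
    rw [intervalIntegral.integral_sub (Real.continuous_exp.intervalIntegrable 0 x)
      (intervalIntegrable_const)]
    rw [integral_exp, intervalIntegral.integral_const]
    simp
  rw [g_eq, ← hval]; exact hint

/-- Upper bound: for `x ≥ 4`, `g x ≤ e^{x-√x} + e^x/(x-√x)`. -/
lemma g_upper {x : ℝ} (hx : 4 ≤ x) : g x ≤ Real.exp (x - Real.sqrt x)
    + Real.exp x / (x - Real.sqrt x) := by
  set s := Real.sqrt x with hs
  have hx0 : (0:ℝ) ≤ x := by linarith
  have hs2 : 2 ≤ s := by
    have : Real.sqrt 4 ≤ s := Real.sqrt_le_sqrt hx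
    rwa [show (4:ℝ) = 2^2 by norm_num, Real.sqrt_sq (by norm_num : (0:ℝ) ≤ 2)] at this
  have hss : s * s = x := Real.mul_self_sqrt hx0
  have hsx : s ≤ x / 2 := by nlinarith
  have hc : 2 ≤ x - s := by linarith
  have hc0 : 0 < x - s := by linarith
  have hsplit : g x = (∫ z in (0:ℝ)..(x - s), phi z) + ∫ z in (x - s)..x, phi z := by
    rw [g_eq, ← intervalIntegral.integral_add_adjacent_intervals (phi_intInt 0 (x-s))
      (phi_intInt (x-s) x)]
  have h1 : (∫ z in (0:ℝ)..(x - s), phi z) ≤ Real.exp (x - s) := by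
    calc (∫ z in (0:ℝ)..(x - s), phi z) ≤ ∫ z in (0:ℝ)..(x - s), Real.exp z := by
          apply intervalIntegral.integral_mono_on (le_of_lt hc0) (phi_intInt 0 (x-s))
            (Real.continuous_exp.intervalIntegrable 0 (x-s))
          intro z hz; exact phi_le_exp hz.1
      _ = Real.exp (x - s) - 1 := by rw [integral_exp, Real.exp_zero]
      _ ≤ Real.exp (x - s) := by linarith
  have h2 : (∫ z in (x - s)..x, phi z) ≤ Real.exp x / (x - s) := by
    calc (∫ z in (x - s)..x, phi z) ≤ ∫ z in (x - s)..x, Real.exp z / (x - s) := by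
          apply intervalIntegral.integral_mono_on (by linarith) (phi_intInt (x-s) x)
            ((Real.continuous_exp.div_const _).intervalIntegrable (x-s) x)
          intro z hz
          have hz0 : z ≠ 0 := by intro h; rw [h] at hz; linarith [hz.1]
          have hzpos : 0 < z := by linarith [hz.1]
          simp only [phi, hz0, if_false]
          apply div_le_div₀ (Real.exp_pos z).le _ hc0 hz.1
          linarith [Real.exp_pos z]
      _ = (Real.exp x - Real.exp (x - s)) / (x - s) := by
          rw [intervalIntegral.integral_div, integral_exp]
      _ ≤ Real.exp x / (x - s) := by
          gcongr
          linarith [Real.exp_pos (x - s)]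
  rw [hsplit]; exact add_le_add h1 h2

lemma sqrt_tendsto_atTop : Tendsto Real.sqrt atTop atTop := by
  rw [tendsto_atTop_atTop]
  intro b
  refine ⟨max (b^2) 0, fun x hx => ?_⟩
  calc b ≤ |b| := le_abs_self b
    _ = Real.sqrt (b^2) := (Real.sqrt_sq_eq_abs b).symm
    _ ≤ Real.sqrt x := Real.sqrt_le_sqrt (le_trans (le_max_left _ _) hx)

lemma key_limit : Tendsto (fun x => x * h1 x) atTop (nhds 1) := by
  -- first: x * exp(-x) * g x → 1
  have hnum : Tendsto (fun x => x * Real.exp (-x) * g x) atTop (nhds 1) := by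
    have hlow : Tendsto (fun x => 1 - (1 + x) * Real.exp (-x)) atTop (nhds 1) := by
      have h1 : Tendsto (fun x : ℝ => (1 + x) * Real.exp (-x)) atTop (nhds 0) := by
        have ha := Real.tendsto_exp_neg_atTop_nhds_zero
        have hb := Real.tendsto_pow_mul_exp_neg_atTop_nhds_zero 1
        have := ha.add hb
        simp only [add_zero] at this
        refine this.congr fun x => by ring
      simpa using (tendsto_const_nhds (x := (1:ℝ))).sub h1
    have hupp : Tendsto (fun x => x * Real.exp (-Real.sqrt x) + x / (x - Real.sqrt x))
        atTop (nhds 1) := by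
      have h1 : Tendsto (fun x : ℝ => x * Real.exp (-Real.sqrt x)) atTop (nhds 0) := by
        have h2 := (Real.tendsto_pow_mul_exp_neg_atTop_nhds_zero 2).comp sqrt_tendsto_atTop
        apply h2.congr'
        filter_upwards [eventually_ge_atTop (0:ℝ)] with x hx
        simp [Function.comp, Real.sq_sqrt hx]
      have h2 : Tendsto (fun x : ℝ => x / (x - Real.sqrt x)) atTop (nhds 1) := by
        have h3 : Tendsto (fun x : ℝ => 1 + 1 / (Real.sqrt x - 1)) atTop (nhds 1) := by
          have h4 : Tendsto (fun x : ℝ => 1 / (Real.sqrt x - 1)) atTop (nhds 0) := by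
            apply tendsto_inv_atTop_zero.comp ((tendsto_atTop_add_const_right _ (-1)
              sqrt_tendsto_atTop).congr fun x => by ring) |>.congr fun x => (one_div _).symm
          simpa using (tendsto_const_nhds (x := (1:ℝ))).add h4
        apply h3.congr'
        filter_upwards [eventually_ge_atTop (4:ℝ)] with x hx
        have hx0 : (0:ℝ) ≤ x := by linarith
        have hs2 : 2 ≤ Real.sqrt x := by
          have : Real.sqrt 4 ≤ Real.sqrt x := Real.sqrt_le_sqrt hx
          rwa [show (4:ℝ) = 2^2 by norm_num, Real.sqrt_sq (by norm_num : (0:ℝ) ≤ 2)] at this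
        have hss : Real.sqrt x * Real.sqrt x = x := Real.mul_self_sqrt hx0
        have h5 : Real.sqrt x - 1 ≠ 0 := by intro h; nlinarith
        have h6 : x - Real.sqrt x ≠ 0 := by intro h; nlinarith
        field_simp
        nlinarith
      simpa using h1.add h2
    apply tendsto_of_tendsto_of_tendsto_of_le_of_le' hlow hupp
    · filter_upwards [eventually_ge_atTop (4:ℝ)] with x hx
      have hx0 : (0:ℝ) < x := by linarith
      have := g_lower hx0
      have hmul : x * Real.exp (-x) * ((Real.exp x - 1 - x)/x) ≤ x * Real.exp (-x) * g x := by
        apply mul_le_mul_of_nonneg_left this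
        positivity
      have hid : x * Real.exp (-x) * ((Real.exp x - 1 - x)/x) = 1 - (1+x)*Real.exp (-x) := by
        have he : Real.exp (-x) * Real.exp x = 1 := by rw [← Real.exp_add]; simp
        field_simp
        nlinarith
      linarith [hmul, hid.symm.le]
    · filter_upwards [eventually_ge_atTop (4:ℝ)] with x hx
      have hx0 : (0:ℝ) < x := by linarith
      have hg := g_upper hx
      have hmul : x * Real.exp (-x) * g x ≤
          x * Real.exp (-x) * (Real.exp (x - Real.sqrt x) + Real.exp x / (x - Real.sqrt x)) := by
        apply mul_le_mul_of_nonneg_left hg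
        positivity
      have hs2 : 2 ≤ Real.sqrt x := by
        have : Real.sqrt 4 ≤ Real.sqrt x := Real.sqrt_le_sqrt hx
        rwa [show (4:ℝ) = 2^2 by norm_num, Real.sqrt_sq (by norm_num : (0:ℝ) ≤ 2)] at this
      have hss : Real.sqrt x * Real.sqrt x = x := Real.mul_self_sqrt hx0.le
      have hc0 : x - Real.sqrt x ≠ 0 := by intro h; nlinarith
      have hid : x * Real.exp (-x) * (Real.exp (x - Real.sqrt x) + Real.exp x / (x - Real.sqrt x))
          = x * Real.exp (-Real.sqrt x) + x / (x - Real.sqrt x) := by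
        have he1 : Real.exp (-x) * Real.exp (x - Real.sqrt x) = Real.exp (-Real.sqrt x) := by
          rw [← Real.exp_add]; ring_nf
        have he2 : Real.exp (-x) * Real.exp x = 1 := by rw [← Real.exp_add]; simp
        rw [mul_add]
        congr 1
        · rw [mul_assoc, he1]
        · rw [← mul_div_assoc, mul_assoc, he2, mul_one]
      linarith [hmul, hid.le]
  -- divide by (1 - exp(-x)) → 1
  have hden : Tendsto (fun x : ℝ => 1 - Real.exp (-x)) atTop (nhds 1) := by
    simpa using (tendsto_const_nhds (x := (1:ℝ))).sub Real.tendsto_exp_neg_atTop_nhds_zero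
  have := hnum.div hden one_ne_zero
  simp only [div_one] at this
  apply this.congr fun x => ?_
  simp only [Pi.div_apply, h1]
  ring

lemma h1_contOn : ContinuousOn h1 (Set.Ioi 0) := by
  apply ContinuousOn.div
  · exact ((Real.continuous_exp.comp continuous_neg).mul g_cont).continuousOn
  · exact (continuous_const.sub (Real.continuous_exp.comp continuous_neg)).continuousOn
  · intro x hx
    have : Real.exp (-x) < 1 := by
      rw [Real.exp_lt_one_iff]  -- maybe wrong name
      simpa using (Set.mem_Ioi.mp hx)
    intro h; linarith [this, sub_eq_zero.mp h]

/-- Analytic core of the asymptotic load formula: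
`∫_a^b f(r)·λ·h¹(λ J(r)) dr → ∫_a^b f(r)/J(r) dr` as `λ → ∞`. -/
theorem integral_load_asymptotic (a b : ℝ) (hab : a < b) (J f : ℝ → ℝ)
    (hJc : ContinuousOn J (Set.Icc a b)) (hJpos : ∀ r ∈ Set.Icc a b, 0 < J r)
    (hfc : ContinuousOn f (Set.Icc a b)) :
    Tendsto (fun lam : ℝ => ∫ r in a..b, f r * lam * h1 (lam * J r)) atTop
      (nhds (∫ r in a..b, f r / J r)) := by
  -- min of J and bound for f on the compact interval
  obtain ⟨rm, hrm, hmin⟩ := isCompact_Icc.exists_isMinOn (Set.nonempty_Icc.mpr hab.le)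
    hJc
  set m := J rm with hm
  have hm0 : 0 < m := hJpos rm hrm
  obtain ⟨C, hC⟩ := isCompact_Icc.exists_bound_of_continuousOn hfc
  -- eventual bound on x * h1 x
  have h2 := key_limit.eventually (Metric.closedBall_mem_nhds (1:ℝ) one_pos)
  rw [eventually_atTop] at h2
  obtain ⟨x0, hx0⟩ := h2
  have habs : ∀ x ≥ x0, |x * h1 x| ≤ 2 := by
    intro x hx
    have := hx0 x hx
    rw [Real.dist_eq] at this
    cases abs_le.mp this with
    | intro h1 h2 => rw [abs_le]; constructor <;> linarith
  have huIoc : Set.uIoc a b = Set.Ioc a b := Set.uIoc_of_le hab.le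
  have hsub : Set.Ioc a b ⊆ Set.Icc a b := Set.Ioc_subset_Icc_self
  apply intervalIntegral.tendsto_integral_filter_of_dominated_convergence
    (fun _ => C * (2 / m))
  · -- measurability
    filter_upwards [eventually_gt_atTop (0:ℝ)] with lam hlam
    have hcont : ContinuousOn (fun r => f r * lam * h1 (lam * J r)) (Set.Icc a b) := by
      apply ContinuousOn.mul (hfc.mul continuousOn_const)
      apply h1_contOn.comp (continuousOn_const.mul hJc)
      intro r hr
      exact Set.mem_Ioi.mpr (mul_pos hlam (hJpos r hr))
    have := hcont.aestronglyMeasurable (μ := MeasureTheory.volume) measurableSet_Icc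
    rw [huIoc]
    exact this.mono_measure (MeasureTheory.Measure.restrict_mono hsub le_rfl)
  · -- uniform bound
    filter_upwards [eventually_ge_atTop (max (x0 / m) 1)] with lam hlam
    apply MeasureTheory.ae_of_all
    intro r hr
    rw [huIoc] at hr
    have hrI : r ∈ Set.Icc a b := hsub hr
    have hJr : 0 < J r := hJpos r hrI
    have hJrm : m ≤ J r := hmin hrI
    have hlam1 : (1:ℝ) ≤ lam := le_trans (le_max_right _ _) hlam
    have hlam0 : 0 < lam := lt_of_lt_of_le one_pos hlam1
    have hx : x0 ≤ lam * J r := by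
      have h5 : x0 / m ≤ lam := le_trans (le_max_left _ _) hlam
      have : x0 / m * m ≤ lam * J r := by
        apply mul_le_mul h5 hJrm hm0.le hlam0.le
      rwa [div_mul_cancel₀ _ hm0.ne'] at this
    have hb1 := habs (lam * J r) hx
    have hkey : |lam * h1 (lam * J r)| ≤ 2 / m := by
      have heq : lam * h1 (lam * J r) = (lam * J r * h1 (lam * J r)) / J r := by
        field_simp
      rw [heq, abs_div, abs_of_pos hJr]
      exact div_le_div₀ (by norm_num) hb1 hm0 hJrm
    calc ‖f r * lam * h1 (lam * J r)‖ = |f r| * |lam * h1 (lam * J r)| := by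
          rw [mul_assoc, Real.norm_eq_abs, abs_mul]
      _ ≤ C * (2 / m) := by
          apply mul_le_mul (hC r hrI) hkey (abs_nonneg _)
          exact le_trans (abs_nonneg _) (hC r hrI)
  · exact intervalIntegrable_const
  · -- pointwise limit
    apply MeasureTheory.ae_of_all
    intro r hr
    rw [huIoc] at hr
    have hrI : r ∈ Set.Icc a b := hsub hr
    have hJr : 0 < J r := hJpos r hrI
    have hcomp : Tendsto (fun lam : ℝ => lam * J r) atTop atTop :=
      Tendsto.atTop_mul_const hJr tendsto_id
    have h6 : Tendsto (fun lam : ℝ => (lam * J r) * h1 (lam * J r)) atTop (nhds 1) :=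
      key_limit.comp hcomp
    have h7 := h6.const_mul (f r / J r)
    rw [mul_one] at h7
    apply h7.congr fun lam => ?_
    field_simp
end

section
/- Let λ, R, R_a > 0 and q = R_a/R, and let α > 1 be a real number with α − 1 < q²/(1+2q). Then for every integer i ≥ 1 one has ā + ā_1 + ā_2 + ⋯ + ā_i > ā_{i+1}·(α−1). -/
open Real

/-- Mean number of Poisson points in the attack disk of radius `Ra`. -/
noncomputable def abar0 (lam Ra : ℝ) : ℝ := lam * π * Ra ^ 2

/-- Mean number of Poisson points in the i-th annulus of width `R`
around the attack disk of radius `Ra`. -/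
noncomputable def abar (lam R Ra : ℝ) (i : ℕ) : ℝ :=
  lam * π * ((Ra + i * R) ^ 2 - (Ra + ((i : ℝ) - 1) * R) ^ 2)

lemma sum_abar (lam R Ra : ℝ) :
    ∀ i : ℕ, abar0 lam Ra + ∑ j ∈ Finset.Icc 1 i, abar lam R Ra j
      = lam * π * (Ra + i * R) ^ 2 := by
  intro i
  induction i with
  | zero => simp [abar0]
  | succ n ih =>
      rw [Finset.sum_Icc_succ_top (by omega : 1 ≤ n + 1), ← add_assoc, ih, abar]
      push_cast
      ring

theorem cumulative_absorb (lam R Ra α : ℝ) (hlam : 0 < lam) (hR : 0 < R) (hRa : 0 < Ra)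
    (hα : 1 < α) (h : α - 1 < (Ra / R) ^ 2 / (1 + 2 * (Ra / R))) :
    ∀ i : ℕ, 1 ≤ i →
      abar0 lam Ra + ∑ j ∈ Finset.Icc 1 i, abar lam R Ra j >
        abar lam R Ra (i + 1) * (α - 1) := by
  intro i hi
  rw [sum_abar, abar]
  have hq : (0:ℝ) < 1 + 2 * (Ra / R) := by positivity
  have h' : (α - 1) * (R ^ 2 + 2 * Ra * R) < Ra ^ 2 := by
    rw [lt_div_iff₀ hq] at h
    have hq2 : Ra / R * R = Ra := div_mul_cancel₀ _ hR.ne'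
    have h3 : (Ra / R) ^ 2 * R ^ 2 = Ra ^ 2 := by rw [← mul_pow, hq2]
    have h4 : Ra / R * R ^ 2 = Ra * R := by rw [sq, ← mul_assoc, hq2]
    nlinarith [mul_lt_mul_of_pos_right h (by positivity : (0:ℝ) < R^2), h3, h4]
  have hx : Ra + R ≤ Ra + (i : ℝ) * R := by
    have : (1:ℝ) ≤ (i : ℝ) := by exact_mod_cast hi
    nlinarith
  have hπ := pi_pos
  have key : ((Ra + ((i:ℕ)+1 : ℝ) * R) ^ 2 - (Ra + (((i:ℕ)+1 : ℝ) - 1) * R) ^ 2) * (α - 1)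
      < (Ra + (i:ℝ) * R) ^ 2 := by
    have hα1 : 0 < α - 1 := by linarith
    nlinarith [hx, h', mul_pos hRa hR, sq_nonneg (Ra + (i:ℝ)*R - Ra)]
  push_cast
  nlinarith [mul_pos hlam hπ, key]
end

section
/- Let c₁, c₂ be points of the Euclidean plane ℝ², let d = ‖c₁ − c₂‖, and let r₁, r₂ > 0 satisfy |r₁ − r₂| < d < r₁ + r₂. Then the two-dimensional Lebesgue measure of the intersection of the closed disks of radius r₁ about c₁ and radius r₂ about c₂ equals r₂²·arccos((d² + r₂² − r₁²)/(2dr₂)) + r₁²·arccos((d² + r₁² − r₂²)/(2dr₁)) − (1/2)·√((−d+r₁+r₂)(d+r₂−r₁)(d−r₂+r₁)(d+r₂+r₁)). -/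
/-!
Move the centres to `(0, 0)` and `(d, 0)` by an isometry of the plane. The lens is then
`{(x, y) | y² ≤ min (r₁² - x²) (r₂² - (x - d)²)}`, so by Cavalieri its area is the integral of
the chord length `2 √(min …)`. The two circles meet on the line `x = a` with
`2 d a = d² + r₁² - r₂²`; left of it the chord is cut by the second circle, right of it by the
first, and each side is a circular segment, of area `r² arccos (t / r) - t √(r² - t²)`.
With the half-chord `h = √(r₁² - a²) = √(r₂² - (d - a)²)`, the two triangular corrections
`(d - a) h` and `a h` add up to `d h`, which Heron's formula turns into `½ √(…)`.
-/

open Real MeasureTheory Metric intervalIntegral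

theorem volume_setOf_sq_le (m : ℝ) : volume {y : ℝ | y ^ 2 ≤ m} = ENNReal.ofReal (2 * √m) := by
  rcases le_or_gt 0 m with hm | hm
  · have : {y : ℝ | y ^ 2 ≤ m} = Set.Icc (-√m) √m := by ext y; exact Real.sq_le hm
    rw [this, Real.volume_Icc]
    ring_nf
  · have : {y : ℝ | y ^ 2 ≤ m} = ∅ :=
      Set.eq_empty_of_forall_notMem fun y hy => (hm.trans_le (sq_nonneg y)).not_ge hy
    simp [this, sqrt_eq_zero_of_nonpos hm.le]

theorem volume_setOf_snd_sq_le {m : ℝ → ℝ} (hm : Measurable m) :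
    volume {p : ℝ × ℝ | p.2 ^ 2 ≤ m p.1} = ∫⁻ x, ENNReal.ofReal (2 * √(m x)) := by
  have hs : MeasurableSet {p : ℝ × ℝ | p.2 ^ 2 ≤ m p.1} :=
    measurableSet_le (by fun_prop) (by fun_prop)
  rw [Measure.volume_eq_prod, Measure.prod_apply hs]
  simp_rw [Set.preimage, Set.mem_ofPred_eq, volume_setOf_sq_le]

theorem hasDerivAt_mul_sqrt_add_arcsin {r x : ℝ} (hr : 0 < r) (hx : x ∈ Set.Ioo (-r) r) :
    HasDerivAt (fun x => x * √(r ^ 2 - x ^ 2) + r ^ 2 * arcsin (x / r))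
      (2 * √(r ^ 2 - x ^ 2)) x := by
  obtain ⟨hx₁, hx₂⟩ := hx
  have hpos : 0 < r ^ 2 - x ^ 2 := by nlinarith
  have hsqrt :
      HasDerivAt (fun x => √(r ^ 2 - x ^ 2)) (-(2 * x) / (2 * √(r ^ 2 - x ^ 2))) x := by
    simpa using ((hasDerivAt_pow 2 x).const_sub (r ^ 2)).sqrt hpos.ne'
  have harcsin : HasDerivAt (fun x => arcsin (x / r)) (1 / √(1 - (x / r) ^ 2) * (1 / r)) x := by
    refine (hasDerivAt_arcsin ?_ ?_).comp x ((hasDerivAt_id x).div_const r)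
    · rw [ne_eq, div_eq_iff hr.ne']; linarith
    · rw [ne_eq, div_eq_iff hr.ne']; linarith
  refine (((hasDerivAt_id x).mul hsqrt).add (harcsin.const_mul (r ^ 2))).congr_deriv ?_
  have h1 : √(1 - (x / r) ^ 2) = √(r ^ 2 - x ^ 2) / r := by
    rw [show 1 - (x / r) ^ 2 = (r ^ 2 - x ^ 2) / r ^ 2 by field_simp, sqrt_div hpos.le,
      sqrt_sq hr.le]
  have h2 := sq_sqrt hpos.le
  rw [h1, id]
  field_simp
  linear_combination -h2

theorem integral_two_mul_sqrt_sq_sub_sq {r t : ℝ} (hr : 0 < r) (ht : |t| ≤ r) :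
    ∫ x in t..r, 2 * √(r ^ 2 - x ^ 2) = r ^ 2 * arccos (t / r) - t * √(r ^ 2 - t ^ 2) := by
  rw [abs_le] at ht
  rw [integral_eq_sub_of_hasDerivAt_of_le ht.2 (by fun_prop)
    (fun x hx => hasDerivAt_mul_sqrt_add_arcsin hr ⟨ht.1.trans_lt hx.1, hx.2⟩)
    ((by fun_prop : Continuous fun x => 2 * √(r ^ 2 - x ^ 2)).intervalIntegrable _ _)]
  simp [hr.ne', arccos_eq_pi_div_two_sub_arcsin]
  ring

theorem integral_two_mul_sqrt_min_lens {d r₁ r₂ a : ℝ} (hd : 0 < d) (hr₁ : 0 < r₁) (hr₂ : 0 < r₂)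
    (ha : 2 * d * a = d ^ 2 + r₁ ^ 2 - r₂ ^ 2) (ha₁ : |a| ≤ r₁) :
    ∫ x, 2 * √(min (r₁ ^ 2 - x ^ 2) (r₂ ^ 2 - (x - d) ^ 2)) =
      r₂ ^ 2 * arccos ((d - a) / r₂) + r₁ ^ 2 * arccos (a / r₁) - d * √(r₁ ^ 2 - a ^ 2) := by
  have hchord : r₂ ^ 2 - (d - a) ^ 2 = r₁ ^ 2 - a ^ 2 := by linear_combination ha
  have hgap (x : ℝ) : (r₁ ^ 2 - x ^ 2) - (r₂ ^ 2 - (x - d) ^ 2) = 2 * d * (a - x) := by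
    linear_combination -ha
  have ha₂ : |d - a| ≤ r₂ :=
    abs_le_of_sq_le_sq (by nlinarith [sq_abs a, abs_nonneg a]) hr₂.le
  obtain ⟨ha₁l, ha₁r⟩ := abs_le.1 ha₁
  obtain ⟨ha₂l, ha₂r⟩ := abs_le.1 ha₂
  have hg : Continuous fun x => 2 * √(min (r₁ ^ 2 - x ^ 2) (r₂ ^ 2 - (x - d) ^ 2)) := by fun_prop
  have hsupp : Function.support (fun x => 2 * √(min (r₁ ^ 2 - x ^ 2) (r₂ ^ 2 - (x - d) ^ 2))) ⊆
      Set.Ioc (d - r₂) r₁ := by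
    refine Function.support_subset_iff'.2 fun x hx => ?_
    rw [Set.mem_Ioc, not_and_or, not_lt, not_le] at hx
    have : min (r₁ ^ 2 - x ^ 2) (r₂ ^ 2 - (x - d) ^ 2) ≤ 0 := by
      rcases hx with hx | hx
      · exact (min_le_right _ _).trans (by nlinarith)
      · exact (min_le_left _ _).trans (by nlinarith)
    simp [sqrt_eq_zero_of_nonpos this]
  have hleft : ∫ x in (d - r₂)..a, 2 * √(min (r₁ ^ 2 - x ^ 2) (r₂ ^ 2 - (x - d) ^ 2)) =
      ∫ x in (d - r₂)..a, 2 * √(r₂ ^ 2 - (d - x) ^ 2) := by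
    refine integral_congr fun x hx => ?_
    rw [Set.uIcc_of_le (by linarith)] at hx
    have := hgap x
    rw [min_eq_right (by nlinarith [hx.2]), ← neg_sub d x, neg_sq]
  have hright : ∫ x in a..r₁, 2 * √(min (r₁ ^ 2 - x ^ 2) (r₂ ^ 2 - (x - d) ^ 2)) =
      ∫ x in a..r₁, 2 * √(r₁ ^ 2 - x ^ 2) := by
    refine integral_congr fun x hx => ?_
    rw [Set.uIcc_of_le ha₁r] at hx
    have := hgap x
    rw [min_eq_left (by nlinarith [hx.1])]
  rw [← integral_eq_integral_of_support_subset hsupp,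
    ← integral_add_adjacent_intervals (hg.intervalIntegrable _ a) (hg.intervalIntegrable a _),
    hleft, hright, integral_comp_sub_left (fun x => 2 * √(r₂ ^ 2 - x ^ 2)), sub_sub_cancel,
    integral_two_mul_sqrt_sq_sub_sq hr₂ ha₂, integral_two_mul_sqrt_sq_sub_sq hr₁ ha₁, hchord]
  ring

theorem toReal_volume_lens {d r₁ r₂ : ℝ} (hr₁ : 0 < r₁) (hr₂ : 0 < r₂) (hlow : |r₁ - r₂| < d)
    (hhigh : d < r₁ + r₂) :
    (volume {p : ℝ × ℝ | p.2 ^ 2 ≤ min (r₁ ^ 2 - p.1 ^ 2) (r₂ ^ 2 - (p.1 - d) ^ 2)}).toReal =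
      r₂ ^ 2 * arccos ((d ^ 2 + r₂ ^ 2 - r₁ ^ 2) / (2 * d * r₂)) +
      r₁ ^ 2 * arccos ((d ^ 2 + r₁ ^ 2 - r₂ ^ 2) / (2 * d * r₁)) -
      1 / 2 * √((-d + r₁ + r₂) * (d + r₂ - r₁) * (d - r₂ + r₁) * (d + r₂ + r₁)) := by
  have hd : 0 < d := (abs_nonneg _).trans_lt hlow
  obtain ⟨hlow₁, hlow₂⟩ := abs_lt.1 hlow
  set a := (d ^ 2 + r₁ ^ 2 - r₂ ^ 2) / (2 * d) with ha_def
  have ha : 2 * d * a = d ^ 2 + r₁ ^ 2 - r₂ ^ 2 := by rw [ha_def]; field_simp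
  have hheron : (-d + r₁ + r₂) * (d + r₂ - r₁) * (d - r₂ + r₁) * (d + r₂ + r₁) =
      (2 * d) ^ 2 * (r₁ ^ 2 - a ^ 2) := by
    linear_combination (2 * d * a + (d ^ 2 + r₁ ^ 2 - r₂ ^ 2)) * ha
  have hheron_pos : 0 < (-d + r₁ + r₂) * (d + r₂ - r₁) * (d - r₂ + r₁) * (d + r₂ + r₁) := by
    have : 0 < -d + r₁ + r₂ := by linarith
    have : 0 < d + r₂ - r₁ := by linarith
    have : 0 < d - r₂ + r₁ := by linarith
    positivity
  have ha₁ : |a| ≤ r₁ := abs_le_of_sq_le_sq (by nlinarith) hr₁.le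
  have harg₂ : (d - a) / r₂ = (d ^ 2 + r₂ ^ 2 - r₁ ^ 2) / (2 * d * r₂) := by
    rw [ha_def]; field_simp; ring
  have harg₁ : a / r₁ = (d ^ 2 + r₁ ^ 2 - r₂ ^ 2) / (2 * d * r₁) := by
    rw [ha_def]; field_simp
  rw [volume_setOf_snd_sq_le (m := fun x => min (r₁ ^ 2 - x ^ 2) (r₂ ^ 2 - (x - d) ^ 2))
    (by fun_prop), ← integral_eq_lintegral_of_nonneg_ae
    (ae_of_all _ fun x => by positivity) (by fun_prop),
    integral_two_mul_sqrt_min_lens hd hr₁ hr₂ ha ha₁, hheron, sqrt_mul (sq_nonneg _),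
    sqrt_sq (by positivity), harg₁, harg₂]
  ring

def euclideanPlaneEquiv : ℝ × ℝ ≃ᵐ EuclideanSpace ℝ (Fin 2) :=
  MeasurableEquiv.finTwoArrow.symm.trans (MeasurableEquiv.toLp 2 (Fin 2 → ℝ))

theorem measurePreserving_euclideanPlaneEquiv : MeasurePreserving euclideanPlaneEquiv :=
  (PiLp.volume_preserving_toLp (Fin 2)).comp (volume_preserving_finTwoArrow ℝ).symm

theorem dist_euclideanPlaneEquiv (p q : ℝ × ℝ) :
    dist (euclideanPlaneEquiv p) (euclideanPlaneEquiv q) =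
      √((p.1 - q.1) ^ 2 + (p.2 - q.2) ^ 2) := by
  simp [EuclideanSpace.dist_eq, Fin.sum_univ_two, euclideanPlaneEquiv, Real.dist_eq, sq_abs]

theorem volume_closedBall_inter_closedBall_euclideanPlaneEquiv {d r₁ r₂ : ℝ} (hr₁ : 0 ≤ r₁)
    (hr₂ : 0 ≤ r₂) :
    volume (closedBall (euclideanPlaneEquiv (0, 0)) r₁ ∩
        closedBall (euclideanPlaneEquiv (d, 0)) r₂) =
      volume {p : ℝ × ℝ | p.2 ^ 2 ≤ min (r₁ ^ 2 - p.1 ^ 2) (r₂ ^ 2 - (p.1 - d) ^ 2)} := by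
  rw [← measurePreserving_euclideanPlaneEquiv.measure_preimage_equiv]
  congr 1
  ext p
  simp only [Set.mem_preimage, Set.mem_inter_iff, mem_closedBall, dist_euclideanPlaneEquiv,
    sqrt_le_left hr₁, sqrt_le_left hr₂, sub_zero, Set.mem_ofPred_eq, le_min_iff]
  constructor <;> rintro ⟨h₁, h₂⟩ <;> constructor <;> linarith

theorem volume_closedBall_inter_closedBall_eq_of_dist_eq {E : Type*} [NormedAddCommGroup E]
    [InnerProductSpace ℝ E] [FiniteDimensional ℝ E] [MeasurableSpace E] [BorelSpace E]
    {c₁ c₂ c₁' c₂' : E} (h : dist c₁ c₂ = dist c₁' c₂') (r₁ r₂ : ℝ) :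
    volume (closedBall c₁ r₁ ∩ closedBall c₂ r₂) =
      volume (closedBall c₁' r₁ ∩ closedBall c₂' r₂) := by
  have hnorm : ‖c₂ - c₁‖ = ‖c₂' - c₁'‖ := by
    rw [← dist_eq_norm, ← dist_eq_norm, dist_comm, h, dist_comm]
  let ρ := (ℝ ∙ (c₂ - c₁ - (c₂' - c₁')))ᗮ.reflection
  let f : E ≃ᵢ E :=
    (IsometryEquiv.subRight c₁).trans (ρ.toIsometryEquiv.trans (IsometryEquiv.addRight c₁'))
  have hf₁ : f c₁ = c₁' := by simp [f]
  have hf₂ : f c₂ = c₂' := by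
    simp [f, ρ, Submodule.reflection_sub hnorm]
  have hf : MeasurePreserving f :=
    (measurePreserving_add_right volume c₁').comp
      (ρ.measurePreserving.comp (measurePreserving_sub_right volume c₁))
  rw [← hf₁, ← hf₂, ← hf.measure_preimage (s := closedBall (f c₁) r₁ ∩ closedBall (f c₂) r₂)
    (measurableSet_closedBall.inter measurableSet_closedBall).nullMeasurableSet,
    Set.preimage_inter, f.isometry.preimage_closedBall, f.isometry.preimage_closedBall]

/-- Area of the intersection of two disks in the Euclidean plane (lens area
formula), when the two circles properly intersect. -/
theorem disk_intersection_area (c₁ c₂ : EuclideanSpace ℝ (Fin 2)) (r₁ r₂ : ℝ)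
    (hr₁ : 0 < r₁) (hr₂ : 0 < r₂)
    (hlow : |r₁ - r₂| < ‖c₁ - c₂‖) (hhigh : ‖c₁ - c₂‖ < r₁ + r₂) :
    (volume (Metric.closedBall c₁ r₁ ∩ Metric.closedBall c₂ r₂)).toReal =
      r₂ ^ 2 * Real.arccos ((‖c₁ - c₂‖ ^ 2 + r₂ ^ 2 - r₁ ^ 2) / (2 * ‖c₁ - c₂‖ * r₂)) +
      r₁ ^ 2 * Real.arccos ((‖c₁ - c₂‖ ^ 2 + r₁ ^ 2 - r₂ ^ 2) / (2 * ‖c₁ - c₂‖ * r₁)) -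
      1 / 2 * Real.sqrt ((-‖c₁ - c₂‖ + r₁ + r₂) * (‖c₁ - c₂‖ + r₂ - r₁) *
        (‖c₁ - c₂‖ - r₂ + r₁) * (‖c₁ - c₂‖ + r₂ + r₁)) := by
  have hdist : dist c₁ c₂ =
      dist (euclideanPlaneEquiv (0, 0)) (euclideanPlaneEquiv (‖c₁ - c₂‖, 0)) := by
    rw [dist_euclideanPlaneEquiv, dist_eq_norm]
    simp
  rw [volume_closedBall_inter_closedBall_eq_of_dist_eq hdist,
    volume_closedBall_inter_closedBall_euclideanPlaneEquiv hr₁.le hr₂.le]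
  exact toReal_volume_lens hr₁ hr₂ hlow hhigh
end
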